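/- Let m, n ≥ 1, p ∈ (0,1), let A be a random m×n matrix with i.i.d. Bernoulli(p) entries, and let ξ_1, …, ξ_m be i.i.d. random variables with Prob(ξ_1 = i) = p(1−p)^i for i = 0,1,2,…. Then Prob(L(A) = m) = Prob(ξ_1 + ξ_2 + ⋯ + ξ_m < n), i.e. the probability that A contains an increasing path of full length m equals the probability that the geometric sum is less than n. -/

import Mathlib

open MeasureTheory
open scoped Classical

/-- `L(A)`: the maximal length of an increasing path in a 0-1 matrix `A`. -/
noncomputable def pathLen {m n : ℕ} (A : Fin m × Fin n → Bool) : ℕ :=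
  sSup {k | ∃ f : Fin k → Fin m × Fin n,
    (∀ i, A (f i) = true) ∧
    ∀ i j : Fin k, i < j → (f i).1 < (f j).1 ∧ (f i).2 ≤ (f j).2}

/-- The distribution of a random `m × n` 0-1 matrix with i.i.d. Bernoulli(p) entries. -/
noncomputable def bernoulliMatrixMeasure (m n : ℕ) (p : ℝ) (hp1 : p ≤ 1) :
    Measure (Fin m × Fin n → Bool) :=
  Measure.pi fun _ =>
    (PMF.bernoulli (Real.toNNReal p) (Real.toNNReal_le_one.mpr hp1)).toMeasure

/-! ### Auxiliary definitions -/

/-- Extension of `v : Fin m → Fin n` to a function `ℕ → ℕ` (zero outside `[0,m)`). -/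
noncomputable def gExt {m n : ℕ} (v : Fin m → Fin n) : ℕ → ℕ :=
  fun k => if h : k < m then (v ⟨k, h⟩ : ℕ) else 0

/-- Partial sum `∑_{k < i} v k`. -/
noncomputable def gLo {m n : ℕ} (v : Fin m → Fin n) (i : ℕ) : ℕ :=
  ∑ k ∈ Finset.range i, gExt v k

/-- Partial sum `∑_{k ≤ i} v k`. -/
noncomputable def gHi {m n : ℕ} (v : Fin m → Fin n) (i : ℕ) : ℕ :=
  ∑ k ∈ Finset.range (i + 1), gExt v k

/-- Index set: gap vectors with total sum `< n`. -/
noncomputable def gS (m n : ℕ) : Finset (Fin m → Fin n) :=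
  Finset.univ.filter (fun v => ∑ i, (v i : ℕ) < n)

/-- For a gap vector `v`, the constraint on the matrix entry at position `x`. -/
noncomputable def gCell {m n : ℕ} (v : Fin m → Fin n) (x : Fin m × Fin n) : Set Bool :=
  if ((x.2 : ℕ)) = gHi v (x.1 : ℕ) then {true}
  else if gLo v (x.1 : ℕ) ≤ (x.2 : ℕ) ∧ (x.2 : ℕ) < gHi v (x.1 : ℕ) then {false}
  else Set.univ

/-- The greedy event associated to a gap vector `v`. -/
noncomputable def gE {m n : ℕ} (v : Fin m → Fin n) : Set (Fin m × Fin n → Bool) :=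
  Set.univ.pi (gCell v)

/-- Candidate columns for the greedy path in row `row`, at column position ≥ `prev`. -/
def gT {m n : ℕ} (A : Fin m × Fin n → Bool) (prev row : ℕ) : Set ℕ :=
  {x | prev ≤ x ∧ ∃ hx : x < n, ∃ hr : row < m, A (⟨row, hr⟩, ⟨x, hx⟩) = true}

/-- The greedy column sequence. -/
noncomputable def greedy {m n : ℕ} (A : Fin m × Fin n → Bool) : ℕ → ℕ
  | 0 => sInf (gT A 0 0)
  | (i + 1) => sInf (gT A (greedy A i) (i + 1))

/-- The previous greedy column (0 for row 0). -/
noncomputable def gPrev {m n : ℕ} (A : Fin m × Fin n → Bool) : ℕ → ℕ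
  | 0 => 0
  | (i + 1) => greedy A i

lemma greedy_eq {m n : ℕ} (A : Fin m × Fin n → Bool) (i : ℕ) :
    greedy A i = sInf (gT A (gPrev A i) i) := by
  cases i <;> rfl

lemma gLo_le_gHi {m n : ℕ} (v : Fin m → Fin n) (i : ℕ) : gLo v i ≤ gHi v i :=
  Finset.sum_le_sum_of_subset (Finset.range_subset_range.2 (Nat.le_succ i))

lemma gHi_mono {m n : ℕ} (v : Fin m → Fin n) {i i' : ℕ} (h : i ≤ i') :
    gHi v i ≤ gHi v i' :=
  Finset.sum_le_sum_of_subset (Finset.range_subset_range.2 (Nat.succ_le_succ h))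

lemma gLo_succ {m n : ℕ} (v : Fin m → Fin n) (i : ℕ) : gLo v (i + 1) = gHi v i := rfl

lemma gExt_sum {m n : ℕ} (v : Fin m → Fin n) :
    ∑ k ∈ Finset.range m, gExt v k = ∑ i : Fin m, (v i : ℕ) := by
  rw [← Fin.sum_univ_eq_sum_range (fun k => gExt v k) m]
  exact Finset.sum_congr rfl fun i _ => by simp [gExt, i.isLt]

lemma gHi_lt_of_mem {m n : ℕ} {v : Fin m → Fin n} (hv : v ∈ gS m n) {i : ℕ} (hi : i < m) :
    gHi v i < n := by
  have h1 : gHi v i ≤ ∑ k ∈ Finset.range m, gExt v k :=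
    Finset.sum_le_sum_of_subset (Finset.range_subset_range.2 hi)
  rw [gExt_sum] at h1
  exact lt_of_le_of_lt h1 (Finset.mem_filter.1 hv).2

/-! ### Characterization of `pathLen = m` -/

lemma mem_pathSet_le {m n : ℕ} (A : Fin m × Fin n → Bool) {k : ℕ}
    (hk : k ∈ {k | ∃ f : Fin k → Fin m × Fin n, (∀ i, A (f i) = true) ∧
      ∀ i j : Fin k, i < j → (f i).1 < (f j).1 ∧ (f i).2 ≤ (f j).2}) : k ≤ m := by
  obtain ⟨f, -, hf⟩ := hk
  have hinj : Function.Injective (fun i => (f i).1) := by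
    intro a b hab
    rcases lt_trichotomy a b with h | h | h
    · exact absurd hab (hf a b h).1.ne
    · exact h
    · exact absurd hab.symm (hf b a h).1.ne
  simpa using Fintype.card_le_of_injective _ hinj

lemma zero_mem_pathSet {m n : ℕ} (A : Fin m × Fin n → Bool) :
    0 ∈ {k | ∃ f : Fin k → Fin m × Fin n, (∀ i, A (f i) = true) ∧
      ∀ i j : Fin k, i < j → (f i).1 < (f j).1 ∧ (f i).2 ≤ (f j).2} :=
  ⟨fun i => i.elim0, fun i => i.elim0, fun i => i.elim0⟩

lemma pathLen_eq_m_iff {m n : ℕ} (A : Fin m × Fin n → Bool) :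
    pathLen A = m ↔ ∃ j : Fin m → Fin n, Monotone j ∧ ∀ i : Fin m, A (i, j i) = true := by
  set T := {k | ∃ f : Fin k → Fin m × Fin n, (∀ i, A (f i) = true) ∧
      ∀ i j : Fin k, i < j → (f i).1 < (f j).1 ∧ (f i).2 ≤ (f j).2} with hT
  have hbdd : BddAbove T := ⟨m, fun k hk => mem_pathSet_le A hk⟩
  constructor
  · intro h
    have hmem : m ∈ T := by
      have := Nat.sSup_mem ⟨0, zero_mem_pathSet A⟩ hbdd
      rwa [show sSup T = pathLen A from rfl, h] at this
    obtain ⟨f, hf1, hf2⟩ := hmem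
    have hsm : StrictMono (fun i => (f i).1) := fun a b hab => (hf2 a b hab).1
    haveI hwf : WellFoundedLT (Fin m) := inferInstance
    have hid : (fun i => (f i).1) = id := by
      have hsurj : Function.Surjective (fun i => (f i).1) :=
        Finite.surjective_of_injective hsm.injective
      have h2 : StrictMono (id : Fin m → Fin m) := strictMono_id
      exact (StrictMono.range_inj hsm h2).1 (by rw [Set.range_id, hsurj.range_eq])
    refine ⟨fun i => (f i).2, ?_, ?_⟩
    · intro a b hab
      rcases eq_or_lt_of_le hab with rfl | hlt
      · exact le_rfl
      · exact (hf2 a b hlt).2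
    · intro i
      have hfi : f i = (i, (f i).2) := by
        refine Prod.ext ?_ rfl
        exact congrFun hid i
      have := hf1 i
      rwa [hfi] at this
  · rintro ⟨j, hj, hA⟩
    have hmem : m ∈ T := ⟨fun i => (i, j i), hA, fun a b hab => ⟨hab, hj hab.le⟩⟩
    refine le_antisymm ?_ ?_
    · exact csSup_le ⟨m, hmem⟩ (fun k hk => mem_pathSet_le A hk)
    · exact le_csSup hbdd hmem

/-! ### Greedy analysis -/

lemma greedy_spec {m n : ℕ} {A : Fin m × Fin n → Bool} {j : Fin m → Fin n}
    (hj : Monotone j) (hA : ∀ i : Fin m, A (i, j i) = true) :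
    ∀ i : ℕ, ∀ hi : i < m,
      greedy A i ∈ gT A (gPrev A i) i ∧ greedy A i ≤ (j ⟨i, hi⟩ : ℕ) := by
  intro i
  induction i with
  | zero =>
    intro hi
    have hmem : ((j ⟨0, hi⟩ : Fin n) : ℕ) ∈ gT A (gPrev A 0) 0 :=
      ⟨Nat.zero_le _, (j ⟨0, hi⟩).isLt, hi, hA ⟨0, hi⟩⟩
    rw [greedy_eq]
    exact ⟨Nat.sInf_mem ⟨_, hmem⟩, Nat.sInf_le hmem⟩
  | succ i ih =>
    intro hi
    have hi' : i < m := Nat.lt_of_succ_lt hi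
    obtain ⟨hmem_i, hle_i⟩ := ih hi'
    have hjle : (j ⟨i, hi'⟩ : ℕ) ≤ (j ⟨i + 1, hi⟩ : ℕ) :=
      hj (by simp [Fin.le_def])
    have hmem : ((j ⟨i + 1, hi⟩ : Fin n) : ℕ) ∈ gT A (gPrev A (i + 1)) (i + 1) :=
      ⟨le_trans hle_i hjle, (j ⟨i + 1, hi⟩).isLt, hi, hA ⟨i + 1, hi⟩⟩
    rw [greedy_eq]
    exact ⟨Nat.sInf_mem ⟨_, hmem⟩, Nat.sInf_le hmem⟩

lemma greedy_min {m n : ℕ} {A : Fin m × Fin n → Bool} {i x : ℕ}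
    (h1 : gPrev A i ≤ x) (h2 : x < greedy A i) (hx : x < n) (hi : i < m) :
    A (⟨i, hi⟩, ⟨x, hx⟩) = false := by
  have hnot : x ∉ gT A (gPrev A i) i := Nat.notMem_of_lt_sInf (by rwa [← greedy_eq])
  simp only [gT, Set.mem_setOf_eq, not_and, not_exists] at hnot
  have := hnot h1 hx hi
  exact Bool.eq_false_iff.2 this

/-- The gap vector of the greedy path. -/
noncomputable def gD {m n : ℕ} (A : Fin m × Fin n → Bool) (i : ℕ) : ℕ :=
  greedy A i - gPrev A i

lemma exists_path_iff {m n : ℕ} (hm : 1 ≤ m) (A : Fin m × Fin n → Bool) :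
    (∃ j : Fin m → Fin n, Monotone j ∧ ∀ i : Fin m, A (i, j i) = true) ↔
      ∃ v ∈ gS m n, A ∈ gE v := by
  constructor
  · rintro ⟨j, hj, hA⟩
    have spec := greedy_spec hj hA
    -- basic facts for i < m
    have hlt : ∀ i, i < m → greedy A i < n := fun i hi => (spec i hi).1.2.1
    have hprev_le : ∀ i, i < m → gPrev A i ≤ greedy A i := fun i hi => ((spec i hi).1).1
    have htrue : ∀ (i) (hi : i < m), A (⟨i, hi⟩, ⟨greedy A i, hlt i hi⟩) = true := by
      intro i hi
      obtain ⟨⟨-, hx, hr, hAx⟩, -⟩ := spec i hi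
      exact hAx
    -- the gap vector
    have hgD_lt : ∀ i : Fin m, gD A (i : ℕ) < n :=
      fun i => lt_of_le_of_lt (Nat.sub_le _ _) (hlt i i.isLt)
    set v : Fin m → Fin n := fun i => ⟨gD A (i : ℕ), hgD_lt i⟩ with hv
    have hext : ∀ k, k < m → gExt v k = gD A k := by
      intro k hk; simp [gExt, hk, hv]
    have hhi : ∀ i, i < m → gHi v i = greedy A i := by
      intro i
      induction i with
      | zero =>
        intro hi
        simp [gHi, hext 0 hi, gD, gPrev]
      | succ i ih =>
        intro hi
        have hi' : i < m := Nat.lt_of_succ_lt hi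
        have : gHi v (i + 1) = gHi v i + gExt v (i + 1) := by
          simp [gHi, Finset.sum_range_succ]
        rw [this, ih hi', hext (i + 1) hi]
        have hle : greedy A i ≤ greedy A (i + 1) := hprev_le (i + 1) hi
        simp [gD, gPrev]
        omega
    have hlo : ∀ i, i < m → gLo v i = gPrev A i := by
      intro i hi
      cases i with
      | zero => simp [gLo, gPrev]
      | succ i => rw [gLo_succ, hhi i (Nat.lt_of_succ_lt hi)]; rfl
    refine ⟨v, ?_, ?_⟩
    · -- v ∈ gS
      rw [gS, Finset.mem_filter]
      refine ⟨Finset.mem_univ _, ?_⟩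
      have h1 : ∑ i : Fin m, (v i : ℕ) = ∑ k ∈ Finset.range m, gExt v k :=
        (gExt_sum v).symm
      have hm1 : m - 1 + 1 = m := Nat.succ_pred_eq_of_pos hm
      have h2 : ∑ k ∈ Finset.range m, gExt v k = gHi v (m - 1) := by
        rw [gHi, hm1]
      rw [h1, h2, hhi (m - 1) (by omega)]
      exact hlt (m - 1) (by omega)
    · -- A ∈ gE v
      intro x _
      obtain ⟨i, c⟩ := x
      simp only [gCell]
      split_ifs with h1 h2
      · -- c = hi: entry is true
        have hhi' := hhi (i : ℕ) i.isLt
        have hc : (c : ℕ) = greedy A (i : ℕ) := by rw [h1, hhi']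
        have := htrue (i : ℕ) i.isLt
        have hceq : c = (⟨greedy A (i : ℕ), hlt _ i.isLt⟩ : Fin n) := Fin.ext hc
        have hieq : i = (⟨(i : ℕ), i.isLt⟩ : Fin m) := Fin.ext rfl
        rw [Set.mem_singleton_iff, hceq, hieq]
        exact this
      · -- lo ≤ c < hi: entry is false
        obtain ⟨hlo', hhi'⟩ := h2
        rw [hlo (i : ℕ) i.isLt] at hlo'
        rw [hhi (i : ℕ) i.isLt] at hhi'
        have := greedy_min hlo' hhi' c.isLt i.isLt
        have hceq : c = (⟨(c : ℕ), c.isLt⟩ : Fin n) := Fin.ext rfl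
        have hieq : i = (⟨(i : ℕ), i.isLt⟩ : Fin m) := Fin.ext rfl
        rw [Set.mem_singleton_iff, hceq, hieq]
        exact this
      · exact Set.mem_univ _
  · rintro ⟨v, hvS, hA⟩
    have hlt : ∀ i : Fin m, gHi v (i : ℕ) < n := fun i => gHi_lt_of_mem hvS i.isLt
    refine ⟨fun i => ⟨gHi v (i : ℕ), hlt i⟩, ?_, ?_⟩
    · intro a b hab
      simp only [Fin.le_def]
      exact gHi_mono v (Fin.le_def.1 hab)
    · intro i
      have hx := hA (i, ⟨gHi v (i : ℕ), hlt i⟩) (Set.mem_univ _)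
      simp only [gCell] at hx
      rw [if_pos trivial] at hx
      simpa using hx

lemma gE_disjoint_aux {m n : ℕ} {v w : Fin m → Fin n} {A : Fin m × Fin n → Bool}
    {k : ℕ} (hk : k < m) (hloeq : gLo v k = gLo w k) (hlt : gHi v k < gHi w k)
    (hn : gHi v k < n) (hAv : A ∈ gE v) (hAw : A ∈ gE w) : False := by
  set c : Fin n := ⟨gHi v k, hn⟩
  set i : Fin m := ⟨k, hk⟩
  have h1 := hAv (i, c) (Set.mem_univ _)
  have h2 := hAw (i, c) (Set.mem_univ _)
  simp only [gCell] at h1 h2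
  rw [if_pos (show (c : ℕ) = gHi v (i : ℕ) from rfl)] at h1
  rw [if_neg hlt.ne, if_pos ⟨by rw [← hloeq]; exact gLo_le_gHi v k, hlt⟩] at h2
  simp only [Set.mem_singleton_iff] at h1 h2
  rw [h1] at h2
  exact absurd h2 (by simp)

lemma gE_disjoint {m n : ℕ} {v w : Fin m → Fin n}
    (hv : v ∈ gS m n) (hw : w ∈ gS m n) (hne : v ≠ w) :
    Disjoint (gE v) (gE w) := by
  rw [Set.disjoint_left]
  intro A hAv hAw
  have hex : ∃ k, gExt v k ≠ gExt w k := by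
    obtain ⟨i, hi⟩ := Function.ne_iff.1 hne
    refine ⟨(i : ℕ), ?_⟩
    simp only [gExt, i.isLt, dif_pos]
    intro h
    exact hi (Fin.ext (by simpa using h))
  classical
  set k := Nat.find hex with hkdef
  have hkspec : gExt v k ≠ gExt w k := Nat.find_spec hex
  have hkmin : ∀ l, l < k → gExt v l = gExt w l := fun l hl =>
    not_not.1 (Nat.find_min hex hl)
  have hkm : k < m := by
    by_contra h
    push_neg at h
    apply hkspec
    simp [gExt, Nat.lt_of_lt_of_le, not_lt.2 h, dif_neg (not_lt.2 h)]
  have hloeq : gLo v k = gLo w k :=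
    Finset.sum_congr rfl fun l hl => hkmin l (Finset.mem_range.1 hl)
  have hhine : gHi v k ≠ gHi w k := by
    simp only [gHi, Finset.sum_range_succ]
    rw [show (∑ l ∈ Finset.range k, gExt v l) = ∑ l ∈ Finset.range k, gExt w l from hloeq]
    intro h
    exact hkspec (Nat.add_left_cancel h)
  rcases lt_or_gt_of_ne hhine with h | h
  · exact gE_disjoint_aux hkm hloeq h (gHi_lt_of_mem hv hkm) hAv hAw
  · exact gE_disjoint_aux hkm hloeq.symm h (gHi_lt_of_mem hw hkm) hAw hAv

theorem prob_full_path_eq_geometric_sum (m n : ℕ) (hm : 1 ≤ m) (hn : 1 ≤ n)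
    {p : ℝ} (hp0 : 0 < p) (hp1 : p < 1)
    (μ : Measure (ℕ → ℕ)) [IsProbabilityMeasure μ]
    (hμ : ∀ (S : Finset ℕ) (f : ℕ → ℕ),
      μ {ω | ∀ i ∈ S, ω i = f i} = ∏ i ∈ S, ENNReal.ofReal (p * (1 - p) ^ f i)) :
    (bernoulliMatrixMeasure m n p hp1.le) {A | pathLen A = m} =
      μ {ω | ∑ i ∈ Finset.range m, ω i < n} := by
  classical
  -- measurability of the greedy events
  have hMfin : ∀ v : Fin m → Fin n, MeasurableSet (gE v) := by
    intro v
    refine MeasurableSet.univ_pi fun x => ?_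
    unfold gCell
    split_ifs
    exacts [measurableSet_singleton _, measurableSet_singleton _, MeasurableSet.univ]
  have hLHS : {A : Fin m × Fin n → Bool | pathLen A = m} = ⋃ v ∈ gS m n, gE v := by
    ext A
    simp only [Set.mem_setOf_eq, Set.mem_iUnion, exists_prop]
    rw [pathLen_eq_m_iff, exists_path_iff hm]
  have hdisj : (↑(gS m n) : Set (Fin m → Fin n)).PairwiseDisjoint gE :=
    fun v hv w hw hne => gE_disjoint hv hw hne
  rw [hLHS, measure_biUnion_finset hdisj (fun v _ => hMfin v)]
  -- single-cell Bernoulli measures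
  set β : Measure Bool :=
    (PMF.bernoulli (Real.toNNReal p) (Real.toNNReal_le_one.mpr hp1.le)).toMeasure with hβ
  have hber_t : β {true} = ENNReal.ofReal p := by
    rw [ENNReal.ofReal, hβ, PMF.toMeasure_apply_singleton _ _ (measurableSet_singleton _),
      PMF.bernoulli_apply, Bool.cond_true]
  have hber_f : β {false} = ENNReal.ofReal (1 - p) := by
    rw [hβ, PMF.toMeasure_apply_singleton _ _ (measurableSet_singleton _),
      PMF.bernoulli_apply, Bool.cond_false, ENNReal.coe_sub, ENNReal.coe_one,
      ENNReal.ofReal_sub 1 hp0.le, ENNReal.ofReal_one, ENNReal.ofReal]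
  -- evaluation of the measure of a greedy event
  have hEval : ∀ v ∈ gS m n, (bernoulliMatrixMeasure m n p hp1.le) (gE v)
      = ∏ i : Fin m, ENNReal.ofReal (p * (1 - p) ^ (v i : ℕ)) := by
    intro v hv
    rw [bernoulliMatrixMeasure, gE, Measure.pi_pi, Fintype.prod_prod_type]
    refine Finset.prod_congr rfl fun i _ => ?_
    have hh : gHi v (i : ℕ) < n := gHi_lt_of_mem hv i.isLt
    have hlohi : gLo v (i : ℕ) ≤ gHi v (i : ℕ) := gLo_le_gHi v _
    -- push β through the if-then-else
    have hcell : ∀ c : Fin n, β (gCell v (i, c)) =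
        if (c : ℕ) = gHi v (i : ℕ) then ENNReal.ofReal p
        else if gLo v (i : ℕ) ≤ (c : ℕ) ∧ (c : ℕ) < gHi v (i : ℕ) then ENNReal.ofReal (1 - p)
        else 1 := by
      intro c
      rw [gCell]
      split_ifs
      · exact hber_t
      · exact hber_f
      · exact measure_univ
    calc ∏ c : Fin n, β (gCell v (i, c))
        = ∏ c : Fin n, (if (c : ℕ) = gHi v (i : ℕ) then ENNReal.ofReal p
            else if gLo v (i : ℕ) ≤ (c : ℕ) ∧ (c : ℕ) < gHi v (i : ℕ) then
              ENNReal.ofReal (1 - p) else 1) :=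
          Finset.prod_congr rfl fun c _ => hcell c
      _ = ENNReal.ofReal p * ENNReal.ofReal (1 - p) ^ ((v i : ℕ)) := by
          rw [Finset.prod_ite]
          have hfilter1 : Finset.univ.filter (fun c : Fin n => (c : ℕ) = gHi v (i : ℕ))
              = {(⟨gHi v (i : ℕ), hh⟩ : Fin n)} := by
            ext c
            simp [Fin.ext_iff]
          rw [hfilter1, Finset.prod_singleton, Finset.prod_ite]
          have hfilter2 : ((Finset.univ.filter
              (fun c : Fin n => ¬ (c : ℕ) = gHi v (i : ℕ))).filter
              (fun c : Fin n => gLo v (i : ℕ) ≤ (c : ℕ) ∧ (c : ℕ) < gHi v (i : ℕ)))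
              = Finset.univ.filter
                (fun c : Fin n => gLo v (i : ℕ) ≤ (c : ℕ) ∧ (c : ℕ) < gHi v (i : ℕ)) := by
            rw [Finset.filter_filter]
            refine Finset.filter_congr fun c _ => ?_
            constructor
            · rintro ⟨-, h⟩; exact h
            · rintro ⟨h1, h2⟩; exact ⟨Nat.ne_of_lt h2, h1, h2⟩
          rw [hfilter2, Finset.prod_const, Finset.prod_const_one, mul_one]
          congr 1
          -- cardinality computation
          have himg : (Finset.univ.filter
              (fun c : Fin n => gLo v (i : ℕ) ≤ (c : ℕ) ∧ (c : ℕ) < gHi v (i : ℕ))).image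
              Fin.val = Finset.Ico (gLo v (i : ℕ)) (gHi v (i : ℕ)) := by
            ext x
            simp only [Finset.mem_image, Finset.mem_filter, Finset.mem_univ, true_and,
              Finset.mem_Ico]
            constructor
            · rintro ⟨c, ⟨h1, h2⟩, rfl⟩; exact ⟨h1, h2⟩
            · rintro ⟨h1, h2⟩
              exact ⟨⟨x, lt_trans h2 hh⟩, ⟨h1, h2⟩, rfl⟩
          have hcard : (Finset.univ.filter
              (fun c : Fin n => gLo v (i : ℕ) ≤ (c : ℕ) ∧ (c : ℕ) < gHi v (i : ℕ))).card
              = (v i : ℕ) := by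
            rw [← Finset.card_image_of_injective _ Fin.val_injective, himg, Nat.card_Ico]
            have : gHi v (i : ℕ) = gLo v (i : ℕ) + gExt v (i : ℕ) := by
              rw [gHi, gLo, Finset.sum_range_succ]
            rw [this]
            simp [gExt, i.isLt]
          rw [hcard]
      _ = ENNReal.ofReal (p * (1 - p) ^ ((v i : ℕ))) := by
          rw [ENNReal.ofReal_mul hp0.le, ENNReal.ofReal_pow (by linarith)]
  -- the cylinder events on the geometric side
  set C : (Fin m → Fin n) → Set (ℕ → ℕ) :=
    fun v => {ω | ∀ i ∈ Finset.range m, ω i = gExt v i} with hC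
  have hCmeas : ∀ v, MeasurableSet (C v) := by
    intro v
    have : C v = ⋂ k ∈ Finset.range m, (fun ω : ℕ → ℕ => ω k) ⁻¹' {gExt v k} := by
      ext ω
      simp [hC]
    rw [this]
    exact MeasurableSet.biInter (Finset.range m).countable_toSet fun k _ =>
      (measurable_pi_apply k) (measurableSet_singleton _)
  have hRHS : {ω : ℕ → ℕ | ∑ i ∈ Finset.range m, ω i < n} = ⋃ v ∈ gS m n, C v := by
    ext ω
    simp only [Set.mem_setOf_eq, Set.mem_iUnion, exists_prop]
    constructor
    · intro hsum
      have hωlt : ∀ k, k < m → ω k < n := by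
        intro k hk
        refine lt_of_le_of_lt ?_ hsum
        exact Finset.single_le_sum (f := ω) (fun l _ => Nat.zero_le _) (Finset.mem_range.2 hk)
      refine ⟨fun i => ⟨ω (i : ℕ), hωlt _ i.isLt⟩, ?_, ?_⟩
      · rw [gS, Finset.mem_filter]
        refine ⟨Finset.mem_univ _, ?_⟩
        have : ∑ i : Fin m, ((⟨ω (i : ℕ), hωlt _ i.isLt⟩ : Fin n) : ℕ)
            = ∑ i ∈ Finset.range m, ω i := Fin.sum_univ_eq_sum_range (fun k => ω k) m
        rw [this]
        exact hsum
      · intro k hk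
        have hk' := Finset.mem_range.1 hk
        simp [hC, gExt, hk']
    · rintro ⟨v, hv, hω⟩
      have : ∑ i ∈ Finset.range m, ω i = ∑ i ∈ Finset.range m, gExt v i :=
        Finset.sum_congr rfl fun k hk => hω k hk
      rw [this, gExt_sum]
      exact (Finset.mem_filter.1 hv).2
  have hCdisj : (↑(gS m n) : Set (Fin m → Fin n)).PairwiseDisjoint C := by
    intro v hv w hw hne
    rw [Function.onFun, Set.disjoint_left]
    intro ω hωv hωw
    obtain ⟨i, hi⟩ := Function.ne_iff.1 hne
    have h1 := hωv (i : ℕ) (Finset.mem_range.2 i.isLt)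
    have h2 := hωw (i : ℕ) (Finset.mem_range.2 i.isLt)
    apply hi
    apply Fin.ext
    have hv' : gExt v (i : ℕ) = (v i : ℕ) := by simp [gExt, i.isLt]
    have hw' : gExt w (i : ℕ) = (w i : ℕ) := by simp [gExt, i.isLt]
    rw [← hv', ← hw', ← h1, ← h2]
  rw [hRHS, measure_biUnion_finset hCdisj (fun v _ => hCmeas v)]
  refine Finset.sum_congr rfl fun v hv => ?_
  rw [hEval v hv]
  have hμv := hμ (Finset.range m) (gExt v)
  rw [show C v = {ω | ∀ i ∈ Finset.range m, ω i = gExt v i} from rfl, hμv]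
  rw [← Fin.prod_univ_eq_prod_range (fun k => ENNReal.ofReal (p * (1 - p) ^ gExt v k)) m]
  exact Finset.prod_congr rfl fun i _ => by simp [gExt, i.isLt]
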